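/- There are cuts φ₀(x) and φ₁(x) such that PA⁻ proves both ∀x φ₀(x) ↔ ∀x φ₁(x) and ∀x( φ₀(x) → φ₁(x) ), but PA⁻ does not prove ∀x( φ₁(x) → φ₀(x) ). -/

import Mathlib

open FirstOrder Language

/-! ### The language `L_OR = {0, 1, +, ×, <}` of ordered rings -/

/-- Function symbols of the language of ordered rings. -/
inductive LorFunc : ℕ → Type
  | zero : LorFunc 0
  | one : LorFunc 0
  | add : LorFunc 2
  | mul : LorFunc 2

/-- Relation symbols of the language of ordered rings: just `<`. -/
inductive LorRel : ℕ → Type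
  | lt : LorRel 2

/-- The first-order language of ordered rings. -/
def Lor : Language := ⟨LorFunc, LorRel⟩

/-- The term `0`. -/
def zeroT {α : Type} : Lor.Term α := Constants.term LorFunc.zero

/-- The term `1`. -/
def oneT {α : Type} : Lor.Term α := Constants.term LorFunc.one

/-- Addition of terms. -/
def addT {α : Type} (t u : Lor.Term α) : Lor.Term α := Functions.apply₂ LorFunc.add t u

/-- Multiplication of terms. -/
def mulT {α : Type} (t u : Lor.Term α) : Lor.Term α := Functions.apply₂ LorFunc.mul t u

/-- The term `2`, an abbreviation for `1 + 1`. -/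
def twoT {α : Type} : Lor.Term α := addT oneT oneT

/-- The numeral `k`, i.e. the closed term `(⋯((0+1)+1)+⋯+1)` with `k` ones. -/
def numT {α : Type} : ℕ → Lor.Term α
  | 0 => zeroT
  | n + 1 => addT (numT n) oneT

/-- The bounded formula `t < u`. -/
def ltBF {α : Type} {n : ℕ} (t u : Lor.Term (α ⊕ Fin n)) : Lor.BoundedFormula α n :=
  Relations.boundedFormula₂ LorRel.lt t u

/-- The formula `t < u`. -/
def ltFml {α : Type} (t u : Lor.Term α) : Lor.Formula α :=
  Relations.formula₂ LorRel.lt t u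

/-- The formula `t ≤ u`, an abbreviation for `t < u ∨ t = u`. -/
def leFml {α : Type} (t u : Lor.Term α) : Lor.Formula α :=
  ltFml t u ⊔ Term.equal t u

/-! ### The base theory `PA⁻` -/

/-- `PA⁻`, the theory of non-negative parts of discretely ordered rings. -/
def PAminus : Lor.Theory :=
  { -- (P1) associativity of +
    ∀' ∀' ∀' (addT (addT &0 &1) &2 =' addT &0 (addT &1 &2)),
    -- (P2) commutativity of +
    ∀' ∀' (addT &0 &1 =' addT &1 &0),
    -- (P3) associativity of ×
    ∀' ∀' ∀' (mulT (mulT &0 &1) &2 =' mulT &0 (mulT &1 &2)),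
    -- (P4) commutativity of ×
    ∀' ∀' (mulT &0 &1 =' mulT &1 &0),
    -- (P5) distributivity
    ∀' ∀' ∀' (mulT &0 (addT &1 &2) =' addT (mulT &0 &1) (mulT &0 &2)),
    -- (P6) x + 0 = x
    ∀' (addT &0 zeroT =' &0),
    -- (P7) x × 0 = 0
    ∀' (mulT &0 zeroT =' zeroT),
    -- (P8) x × 1 = x
    ∀' (mulT &0 oneT =' &0),
    -- (P9) transitivity of <
    ∀' ∀' ∀' (ltBF &0 &1 ⊓ ltBF &1 &2 ⟹ ltBF &0 &2),
    -- (P10) irreflexivity of <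
    ∀' ∼(ltBF &0 &0),
    -- (P11) linearity of <
    ∀' ∀' (ltBF &0 &1 ⊔ &0 =' &1 ⊔ ltBF &1 &0),
    -- (P12) x < y → x + z < y + z
    ∀' ∀' ∀' (ltBF &0 &1 ⟹ ltBF (addT &0 &2) (addT &1 &2)),
    -- (P13) z ≠ 0 ∧ x < y → x × z < y × z
    ∀' ∀' ∀' (∼(&2 =' zeroT) ⊓ ltBF &0 &1 ⟹ ltBF (mulT &0 &2) (mulT &1 &2)),
    -- (P14) x < y ↔ ∃z ((x + z) + 1 = y)
    ∀' ∀' (ltBF &0 &1 ⇔ ∃' (addT (addT &0 &2) oneT =' &1)),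
    -- (P15) 0 < 1 ∧ (x > 0 → x ≥ 1)
    ltBF zeroT oneT ⊓ ∀' (ltBF zeroT &0 ⟹ ltBF oneT &0 ⊔ oneT =' &0),
    -- (P16) x ≥ 0
    ∀' (ltBF zeroT &0 ⊔ zeroT =' &0) }

/-! ### Formulas `θ(x, z̄)` with a distinguished variable `x` and parameters `z̄`

A formula `θ(x, z̄)` with `m` parameters `z̄` and a distinguished induction
variable `x` is represented as `θ : Lor.Formula (Fin m ⊕ Fin 1)`, where the
`Fin m` component gives the parameters and the `Fin 1` component gives `x`. -/

/-- The distinguished variable `x` as a term. -/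
def xT {m : ℕ} : Lor.Term (Fin m ⊕ Fin 1) := Term.var (Sum.inr 0)

/-- `θ(t, z̄)`, where `t` is a term possibly involving `x` and the parameters. -/
def substX {m : ℕ} (θ : Lor.Formula (Fin m ⊕ Fin 1)) (t : Lor.Term (Fin m ⊕ Fin 1)) :
    Lor.Formula (Fin m ⊕ Fin 1) :=
  θ.subst (Sum.elim (fun i => Term.var (Sum.inl i)) fun _ => t)

/-- `θ(t, z̄)` where `t` is a term in the parameters only. -/
def substP {m : ℕ} (θ : Lor.Formula (Fin m ⊕ Fin 1)) (t : Lor.Term (Fin m)) :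
    Lor.Formula (Fin m) :=
  θ.subst (Sum.elim (fun i => Term.var i) fun _ => t)

/-- `Formula.iAlls` as it was defined in the older Mathlib (relabelling map first). -/
noncomputable def iAllsOld {L : Language} {α β γ : Type*} [Finite γ] (f : α → β ⊕ γ)
    (φ : L.Formula α) : L.Formula β :=
  let e := Classical.choice (Classical.choose_spec (Finite.exists_equiv_fin γ))
  (BoundedFormula.relabel (fun a => Sum.map id e (f a)) φ).alls

/-- `∀x θ(x, z̄)`. -/
noncomputable def allX {m : ℕ} (θ : Lor.Formula (Fin m ⊕ Fin 1)) : Lor.Formula (Fin m) :=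
  iAllsOld (fun p => p : Fin m ⊕ Fin 1 → Fin m ⊕ Fin 1) θ

/-- The universal closure of a formula, as a sentence. -/
noncomputable def closeAll {α : Type} [Finite α] (φ : Lor.Formula α) : Lor.Sentence :=
  iAllsOld (Sum.inr : α → Empty ⊕ α) φ

/-- `∀x' < x, θ(x', z̄)`, a formula with free variable `x` (and parameters). -/
noncomputable def allLtX {m : ℕ} (θ : Lor.Formula (Fin m ⊕ Fin 1)) :
    Lor.Formula (Fin m ⊕ Fin 1) :=
  iAllsOld (fun p => p : (Fin m ⊕ Fin 1) ⊕ Fin 1 → (Fin m ⊕ Fin 1) ⊕ Fin 1)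
    (ltFml (Term.var (Sum.inr 0)) (Term.var (Sum.inl (Sum.inr 0))) ⟹
      θ.relabel (Sum.elim (fun i => Sum.inl (Sum.inl i)) fun _ => Sum.inr 0))

/-- `∀x' ≤ x, θ(x', z̄)`, a formula with free variable `x` (and parameters). -/
noncomputable def allLeX {m : ℕ} (θ : Lor.Formula (Fin m ⊕ Fin 1)) :
    Lor.Formula (Fin m ⊕ Fin 1) :=
  iAllsOld (fun p => p : (Fin m ⊕ Fin 1) ⊕ Fin 1 → (Fin m ⊕ Fin 1) ⊕ Fin 1)
    (leFml (Term.var (Sum.inr 0)) (Term.var (Sum.inl (Sum.inr 0))) ⟹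
      θ.relabel (Sum.elim (fun i => Sum.inl (Sum.inl i)) fun _ => Sum.inr 0))

/-- The conjunction `⋀_{k<j} θ(k, z̄)`. -/
def conjNum {m : ℕ} (θ : Lor.Formula (Fin m ⊕ Fin 1)) : ℕ → Lor.Formula (Fin m)
  | 0 => ⊤
  | j + 1 => conjNum θ j ⊓ substP θ (numT j)

/-- The conjunction `⋀_{k<j} θ(x+k, z̄)`. -/
def conjShift {m : ℕ} (θ : Lor.Formula (Fin m ⊕ Fin 1)) : ℕ → Lor.Formula (Fin m ⊕ Fin 1)
  | 0 => ⊤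
  | j + 1 => conjShift θ j ⊓ substX θ (addT xT (numT j))

/-! ### Induction axioms -/

/-- The induction axiom `I_x θ`:
`∀z̄( θ(0,z̄) ∧ ∀x(θ(x,z̄) → θ(x+1,z̄)) → ∀x θ(x,z̄) )`. -/
noncomputable def indAx {m : ℕ} (θ : Lor.Formula (Fin m ⊕ Fin 1)) : Lor.Sentence :=
  closeAll ((substP θ zeroT ⊓ allX (θ ⟹ substX θ (addT xT oneT))) ⟹ allX θ)

/-- The `<`-induction axiom `I^<_x θ`:
`∀z̄( ∀y(∀x<y θ(x,z̄) → θ(y,z̄)) → ∀x θ(x,z̄) )`. -/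
noncomputable def indLtAx {m : ℕ} (θ : Lor.Formula (Fin m ⊕ Fin 1)) : Lor.Sentence :=
  closeAll (allX (allLtX θ ⟹ θ) ⟹ allX θ)

/-- The `(n+1)`-step induction axiom `I^{(n+1)-step}_x θ`:
`∀z̄( ⋀_{k<n+1} θ(k,z̄) ∧ ∀x(θ(x,z̄) → θ(x+n+1,z̄)) → ∀x θ(x,z̄) )`. -/
noncomputable def indStepAx {m : ℕ} (n : ℕ) (θ : Lor.Formula (Fin m ⊕ Fin 1)) : Lor.Sentence :=
  closeAll ((conjNum θ (n + 1) ⊓ allX (θ ⟹ substX θ (addT xT (numT (n + 1))))) ⟹ allX θ)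

/-- The `(n+1)`-induction axiom `I^{n+1}_x θ`:
`∀z̄( ⋀_{k<n+1} θ(k,z̄) ∧ ∀x(⋀_{k<n+1} θ(x+k,z̄) → θ(x+n+1,z̄)) → ∀x θ(x,z̄) )`. -/
noncomputable def indKAx {m : ℕ} (n : ℕ) (θ : Lor.Formula (Fin m ⊕ Fin 1)) : Lor.Sentence :=
  closeAll ((conjNum θ (n + 1) ⊓ allX (conjShift θ (n + 1) ⟹ substX θ (addT xT (numT (n + 1))))) ⟹
    allX θ)

/-- The polynomial induction axiom `I^p_x θ`:
`∀z̄( θ(0,z̄) ∧ ∀x(θ(x,z̄) → θ(2x,z̄) ∧ θ(2x+1,z̄)) → ∀x θ(x,z̄) )`, where `2x` is `(1+1)×x`. -/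
noncomputable def indPAx {m : ℕ} (θ : Lor.Formula (Fin m ⊕ Fin 1)) : Lor.Sentence :=
  closeAll ((substP θ zeroT ⊓
      allX (θ ⟹ substX θ (mulT twoT xT) ⊓ substX θ (addT (mulT twoT xT) oneT))) ⟹ allX θ)

/-! ### Theories -/

/-- Peano arithmetic: `PA⁻` plus induction for all `L_OR` formulas. -/
noncomputable def PA : Lor.Theory :=
  PAminus ∪ {σ | ∃ (m : ℕ) (θ : Lor.Formula (Fin m ⊕ Fin 1)), σ = indAx θ}

/-- `IOpen`: `PA⁻` plus induction for all quantifier-free `L_OR` formulas. -/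
noncomputable def IOpen : Lor.Theory :=
  PAminus ∪ {σ | ∃ (m : ℕ) (θ : Lor.Formula (Fin m ⊕ Fin 1)), θ.IsQF ∧ σ = indAx θ}

/-! ### Notions of inductiveness

A formula `φ(x)` with exactly one free variable `x` is represented as
`φ : Lor.Formula (Fin 0 ⊕ Fin 1)` (no parameters). -/

/-- Formulas `φ(x)` with exactly one free variable `x`. -/
abbrev OneVarFormula : Type := Lor.Formula (Fin 0 ⊕ Fin 1)

/-- The sentence `∀x φ(x)`. -/
noncomputable def allS (φ : OneVarFormula) : Lor.Sentence := closeAll (allX φ)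

/-- `φ(x)` is inductive: `PA⁻ ⊢ φ(0)` and `PA⁻ ⊢ ∀x(φ(x) → φ(x+1))`. -/
noncomputable def IsInductive (φ : OneVarFormula) : Prop :=
  PAminus ⊨ᵇ closeAll (substP φ zeroT) ∧
    PAminus ⊨ᵇ closeAll (allX (φ ⟹ substX φ (addT xT oneT)))

/-- `φ(x)` is `<`-inductive: `PA⁻ ⊢ ∀y(∀x<y φ(x) → φ(y))`. -/
noncomputable def IsLtInductive (φ : OneVarFormula) : Prop :=
  PAminus ⊨ᵇ closeAll (allX (allLtX φ ⟹ φ))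

/-- `φ(x)` is `(n+1)`-step inductive:
`PA⁻ ⊢ ⋀_{k<n+1} φ(k) ∧ ∀x(φ(x) → φ(x+n+1))`. -/
noncomputable def IsStepInductive (n : ℕ) (φ : OneVarFormula) : Prop :=
  PAminus ⊨ᵇ closeAll (conjNum φ (n + 1) ⊓ allX (φ ⟹ substX φ (addT xT (numT (n + 1)))))

/-- `φ(x)` is `(n+1)`-inductive:
`PA⁻ ⊢ ⋀_{k<n+1} φ(k) ∧ ∀x(⋀_{k<n+1} φ(x+k) → φ(x+n+1))`. -/
noncomputable def IsKInductive (n : ℕ) (φ : OneVarFormula) : Prop :=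
  PAminus ⊨ᵇ
    closeAll (conjNum φ (n + 1) ⊓ allX (conjShift φ (n + 1) ⟹ substX φ (addT xT (numT (n + 1)))))

/-- `φ(x)` is p-inductive (polynomially inductive):
`PA⁻ ⊢ φ(0) ∧ ∀x(φ(x) → φ(2x) ∧ φ(2x+1))`. -/
noncomputable def IsPInductive (φ : OneVarFormula) : Prop :=
  PAminus ⊨ᵇ closeAll (substP φ zeroT ⊓
    allX (φ ⟹ substX φ (mulT twoT xT) ⊓ substX φ (addT (mulT twoT xT) oneT)))

/-! ### Cuts -/

/-- `φ(x)` is a cut: an inductive formula with `PA⁻ ⊢ ∀x∀y(x<y ∧ φ(y) → φ(x))`. -/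
noncomputable def IsCut (φ : OneVarFormula) : Prop :=
  IsInductive φ ∧
    PAminus ⊨ᵇ closeAll
      (ltFml (Term.var (Sum.inr 0) : Lor.Term (Fin 0 ⊕ Fin 2)) (Term.var (Sum.inr 1)) ⊓
          φ.relabel (Sum.elim (fun i => Sum.inl i) fun _ => Sum.inr 1) ⟹
        φ.relabel (Sum.elim (fun i => Sum.inl i) fun _ => Sum.inr 0))

/-- `φ(x)` is an a-cut: a cut with `PA⁻ ⊢ ∀x(φ(x) → φ(x+x))`. -/
noncomputable def IsACut (φ : OneVarFormula) : Prop :=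
  IsCut φ ∧ PAminus ⊨ᵇ closeAll (allX (φ ⟹ substX φ (addT xT xT)))

/-- `φ(x)` is an am-cut: an a-cut with `PA⁻ ⊢ ∀x(φ(x) → φ(x×x))`. -/
noncomputable def IsAMCut (φ : OneVarFormula) : Prop :=
  IsACut φ ∧ PAminus ⊨ᵇ closeAll (allX (φ ⟹ substX φ (mulT xT xT)))

namespace Stmt11Aux
open FirstOrder Language

@[simp] lemma realize_iAllsOld {L : Language} {M : Type*} [L.Structure M] {α β γ : Type*}
    [Finite γ] (f : α → β ⊕ γ) (φ : L.Formula α) (v : β → M) :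
    (iAllsOld f φ).Realize v ↔ ∀ i : γ → M, φ.Realize (fun a => Sum.elim v i (f a)) := by
  let e := Classical.choice (Classical.choose_spec (Finite.exists_equiv_fin γ))
  rw [iAllsOld]
  simp only [Nat.add_zero, BoundedFormula.realize_alls, BoundedFormula.realize_relabel,
    Function.comp_def, Fin.castAdd_zero]
  refine Equiv.forall_congr ⟨fun v => v ∘ e, fun v => v ∘ e.symm,
      fun _ => by simp [Function.comp_def],
      fun _ => by simp [Function.comp_def]⟩ ?_
  intro x
  rw [Formula.Realize, iff_iff_eq]
  congr
  · funext a
    rcases f a with b | c <;> simp [e]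
  · funext i
    exact i.elim0

@[simp] lemma realize_iAllsOld' {L : Language} {M : Type*} [L.Structure M] {α β γ : Type*}
    [Finite γ] (f : α → β ⊕ γ) (φ : L.Formula α) (v : β → M) (v' : Fin 0 → M) :
    BoundedFormula.Realize (iAllsOld f φ) v v' ↔
      ∀ i : γ → M, φ.Realize (fun a => Sum.elim v i (f a)) := by
  rw [← realize_iAllsOld, Formula.Realize, show v' = default from Subsingleton.elim _ _]

end Stmt11Aux
namespace Stmt11Aux
open FirstOrder Language Structure

variable {M : Type*} [Lor.Structure M]

def z0 : M := Structure.funMap (L := Lor) (M := M) LorFunc.zero ![]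
def o1 : M := Structure.funMap (L := Lor) (M := M) LorFunc.one ![]
def ad (a b : M) : M := Structure.funMap (L := Lor) (M := M) LorFunc.add ![a, b]
def ml (a b : M) : M := Structure.funMap (L := Lor) (M := M) LorFunc.mul ![a, b]
def lt' (a b : M) : Prop := Structure.RelMap (L := Lor) (M := M) LorRel.lt ![a, b]

@[simp] lemma realize_zeroT {α : Type} (v : α → M) : Term.realize v zeroT = z0 := by
  simp only [zeroT, Constants.term, Term.realize, z0]
  congr
  apply Subsingleton.elim

@[simp] lemma realize_oneT {α : Type} (v : α → M) : Term.realize v oneT = o1 := by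
  simp only [oneT, Constants.term, Term.realize, o1]
  congr
  apply Subsingleton.elim

@[simp] lemma realize_addT {α : Type} (v : α → M) (t u : Lor.Term α) :
    Term.realize v (addT t u) = ad (t.realize v) (u.realize v) := by
  simp only [addT, ad]; exact Term.realize_functions_apply₂

@[simp] lemma realize_mulT {α : Type} (v : α → M) (t u : Lor.Term α) :
    Term.realize v (mulT t u) = ml (t.realize v) (u.realize v) := by
  simp only [mulT, ml]; exact Term.realize_functions_apply₂

def numM : ℕ → M
  | 0 => z0
  | n + 1 => ad (numM n) o1

@[simp] lemma realize_numT {α : Type} (v : α → M) (k : ℕ) :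
    Term.realize v (numT k) = (numM k : M) := by
  induction k with
  | zero => simp [numT, numM]
  | succ n ih => simp [numT, numM, ih]

@[simp] lemma realize_ltBF {α : Type} {n : ℕ} (t u : Lor.Term (α ⊕ Fin n))
    (v : α → M) (xs : Fin n → M) :
    (ltBF t u).Realize v xs ↔ lt' (t.realize (Sum.elim v xs)) (u.realize (Sum.elim v xs)) := by
  simp only [ltBF, lt']; exact BoundedFormula.realize_rel₂

@[simp] lemma realize_ltFml {α : Type} (t u : Lor.Term α) (v : α → M) :
    (ltFml t u).Realize v ↔ lt' (t.realize v) (u.realize v) := by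
  simp only [ltFml, lt']; exact Formula.realize_rel₂

@[simp] lemma realize_leFml {α : Type} (t u : Lor.Term α) (v : α → M) :
    (leFml t u).Realize v ↔ lt' (t.realize v) (u.realize v) ∨ t.realize v = u.realize v := by
  simp only [leFml, Formula.realize_sup, realize_ltFml, Formula.realize_equal]

end Stmt11Aux
namespace Stmt11Aux
open FirstOrder Language Structure

variable {M : Type*} [Lor.Structure M]

lemma axiom_iff_1 : M ⊨ (∀' ∀' ∀' (addT (addT &0 &1) &2 =' addT &0 (addT &1 &2)) : Lor.Sentence) ↔ (∀ a b c : M, ad (ad a b) c = ad a (ad b c)) := by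
  simp [Sentence.Realize, Formula.Realize, BoundedFormula.realize_all,
    BoundedFormula.realize_imp, BoundedFormula.realize_inf, BoundedFormula.realize_sup,
    BoundedFormula.realize_not, BoundedFormula.realize_bdEqual, BoundedFormula.realize_ex,
    BoundedFormula.realize_iff, Fin.snoc]

lemma axiom_iff_2 : M ⊨ (∀' ∀' (addT &0 &1 =' addT &1 &0) : Lor.Sentence) ↔ (∀ a b : M, ad a b = ad b a) := by
  simp [Sentence.Realize, Formula.Realize, BoundedFormula.realize_all,
    BoundedFormula.realize_imp, BoundedFormula.realize_inf, BoundedFormula.realize_sup,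
    BoundedFormula.realize_not, BoundedFormula.realize_bdEqual, BoundedFormula.realize_ex,
    BoundedFormula.realize_iff, Fin.snoc]

lemma axiom_iff_3 : M ⊨ (∀' ∀' ∀' (mulT (mulT &0 &1) &2 =' mulT &0 (mulT &1 &2)) : Lor.Sentence) ↔ (∀ a b c : M, ml (ml a b) c = ml a (ml b c)) := by
  simp [Sentence.Realize, Formula.Realize, BoundedFormula.realize_all,
    BoundedFormula.realize_imp, BoundedFormula.realize_inf, BoundedFormula.realize_sup,
    BoundedFormula.realize_not, BoundedFormula.realize_bdEqual, BoundedFormula.realize_ex,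
    BoundedFormula.realize_iff, Fin.snoc]

lemma axiom_iff_4 : M ⊨ (∀' ∀' (mulT &0 &1 =' mulT &1 &0) : Lor.Sentence) ↔ (∀ a b : M, ml a b = ml b a) := by
  simp [Sentence.Realize, Formula.Realize, BoundedFormula.realize_all,
    BoundedFormula.realize_imp, BoundedFormula.realize_inf, BoundedFormula.realize_sup,
    BoundedFormula.realize_not, BoundedFormula.realize_bdEqual, BoundedFormula.realize_ex,
    BoundedFormula.realize_iff, Fin.snoc]

lemma axiom_iff_5 : M ⊨ (∀' ∀' ∀' (mulT &0 (addT &1 &2) =' addT (mulT &0 &1) (mulT &0 &2)) : Lor.Sentence) ↔ (∀ a b c : M, ml a (ad b c) = ad (ml a b) (ml a c)) := by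
  simp [Sentence.Realize, Formula.Realize, BoundedFormula.realize_all,
    BoundedFormula.realize_imp, BoundedFormula.realize_inf, BoundedFormula.realize_sup,
    BoundedFormula.realize_not, BoundedFormula.realize_bdEqual, BoundedFormula.realize_ex,
    BoundedFormula.realize_iff, Fin.snoc]

lemma axiom_iff_6 : M ⊨ (∀' (addT &0 zeroT =' &0) : Lor.Sentence) ↔ (∀ a : M, ad a z0 = a) := by
  simp [Sentence.Realize, Formula.Realize, BoundedFormula.realize_all,
    BoundedFormula.realize_imp, BoundedFormula.realize_inf, BoundedFormula.realize_sup,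
    BoundedFormula.realize_not, BoundedFormula.realize_bdEqual, BoundedFormula.realize_ex,
    BoundedFormula.realize_iff, Fin.snoc]

lemma axiom_iff_7 : M ⊨ (∀' (mulT &0 zeroT =' zeroT) : Lor.Sentence) ↔ (∀ a : M, ml a z0 = z0) := by
  simp [Sentence.Realize, Formula.Realize, BoundedFormula.realize_all,
    BoundedFormula.realize_imp, BoundedFormula.realize_inf, BoundedFormula.realize_sup,
    BoundedFormula.realize_not, BoundedFormula.realize_bdEqual, BoundedFormula.realize_ex,
    BoundedFormula.realize_iff, Fin.snoc]

lemma axiom_iff_8 : M ⊨ (∀' (mulT &0 oneT =' &0) : Lor.Sentence) ↔ (∀ a : M, ml a o1 = a) := by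
  simp [Sentence.Realize, Formula.Realize, BoundedFormula.realize_all,
    BoundedFormula.realize_imp, BoundedFormula.realize_inf, BoundedFormula.realize_sup,
    BoundedFormula.realize_not, BoundedFormula.realize_bdEqual, BoundedFormula.realize_ex,
    BoundedFormula.realize_iff, Fin.snoc]

lemma axiom_iff_9 : M ⊨ (∀' ∀' ∀' (ltBF &0 &1 ⊓ ltBF &1 &2 ⟹ ltBF &0 &2) : Lor.Sentence) ↔ (∀ a b c : M, lt' a b ∧ lt' b c → lt' a c) := by
  simp [Sentence.Realize, Formula.Realize, BoundedFormula.realize_all,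
    BoundedFormula.realize_imp, BoundedFormula.realize_inf, BoundedFormula.realize_sup,
    BoundedFormula.realize_not, BoundedFormula.realize_bdEqual, BoundedFormula.realize_ex,
    BoundedFormula.realize_iff, Fin.snoc]

lemma axiom_iff_10 : M ⊨ (∀' ∼(ltBF &0 &0) : Lor.Sentence) ↔ (∀ a : M, ¬ lt' a a) := by
  simp [Sentence.Realize, Formula.Realize, BoundedFormula.realize_all,
    BoundedFormula.realize_imp, BoundedFormula.realize_inf, BoundedFormula.realize_sup,
    BoundedFormula.realize_not, BoundedFormula.realize_bdEqual, BoundedFormula.realize_ex,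
    BoundedFormula.realize_iff, Fin.snoc]

lemma axiom_iff_11 : M ⊨ (∀' ∀' (ltBF &0 &1 ⊔ &0 =' &1 ⊔ ltBF &1 &0) : Lor.Sentence) ↔ (∀ a b : M, (lt' a b ∨ a = b) ∨ lt' b a) := by
  simp [Sentence.Realize, Formula.Realize, BoundedFormula.realize_all,
    BoundedFormula.realize_imp, BoundedFormula.realize_inf, BoundedFormula.realize_sup,
    BoundedFormula.realize_not, BoundedFormula.realize_bdEqual, BoundedFormula.realize_ex,
    BoundedFormula.realize_iff, Fin.snoc]

lemma axiom_iff_12 : M ⊨ (∀' ∀' ∀' (ltBF &0 &1 ⟹ ltBF (addT &0 &2) (addT &1 &2)) : Lor.Sentence) ↔ (∀ a b c : M, lt' a b → lt' (ad a c) (ad b c)) := by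
  simp [Sentence.Realize, Formula.Realize, BoundedFormula.realize_all,
    BoundedFormula.realize_imp, BoundedFormula.realize_inf, BoundedFormula.realize_sup,
    BoundedFormula.realize_not, BoundedFormula.realize_bdEqual, BoundedFormula.realize_ex,
    BoundedFormula.realize_iff, Fin.snoc]

lemma axiom_iff_13 : M ⊨ (∀' ∀' ∀' (∼(&2 =' zeroT) ⊓ ltBF &0 &1 ⟹ ltBF (mulT &0 &2) (mulT &1 &2)) : Lor.Sentence) ↔ (∀ a b c : M, ¬(c = z0) ∧ lt' a b → lt' (ml a c) (ml b c)) := by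
  simp [Sentence.Realize, Formula.Realize, BoundedFormula.realize_all,
    BoundedFormula.realize_imp, BoundedFormula.realize_inf, BoundedFormula.realize_sup,
    BoundedFormula.realize_not, BoundedFormula.realize_bdEqual, BoundedFormula.realize_ex,
    BoundedFormula.realize_iff, Fin.snoc]

lemma axiom_iff_14 : M ⊨ (∀' ∀' (ltBF &0 &1 ⇔ ∃' (addT (addT &0 &2) oneT =' &1)) : Lor.Sentence) ↔ (∀ a b : M, lt' a b ↔ ∃ c, ad (ad a c) o1 = b) := by
  simp [Sentence.Realize, Formula.Realize, BoundedFormula.realize_all,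
    BoundedFormula.realize_imp, BoundedFormula.realize_inf, BoundedFormula.realize_sup,
    BoundedFormula.realize_not, BoundedFormula.realize_bdEqual, BoundedFormula.realize_ex,
    BoundedFormula.realize_iff, Fin.snoc]

lemma axiom_iff_15 : M ⊨ (ltBF zeroT oneT ⊓ ∀' (ltBF zeroT &0 ⟹ ltBF oneT &0 ⊔ oneT =' &0) : Lor.Sentence) ↔ (lt' (z0 : M) o1 ∧ ∀ a : M, lt' z0 a → (lt' o1 a ∨ o1 = a)) := by
  simp [Sentence.Realize, Formula.Realize, BoundedFormula.realize_all,
    BoundedFormula.realize_imp, BoundedFormula.realize_inf, BoundedFormula.realize_sup,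
    BoundedFormula.realize_not, BoundedFormula.realize_bdEqual, BoundedFormula.realize_ex,
    BoundedFormula.realize_iff, Fin.snoc]

lemma axiom_iff_16 : M ⊨ (∀' (ltBF zeroT &0 ⊔ zeroT =' &0) : Lor.Sentence) ↔ (∀ a : M, lt' (z0 : M) a ∨ z0 = a) := by
  simp [Sentence.Realize, Formula.Realize, BoundedFormula.realize_all,
    BoundedFormula.realize_imp, BoundedFormula.realize_inf, BoundedFormula.realize_sup,
    BoundedFormula.realize_not, BoundedFormula.realize_bdEqual, BoundedFormula.realize_ex,
    BoundedFormula.realize_iff, Fin.snoc]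

end Stmt11Aux
namespace Stmt11Aux
open FirstOrder Language Structure

variable {M : Type*} [Lor.Structure M]

structure PAm (M : Type*) [Lor.Structure M] : Prop where
  add_assoc : ∀ a b c : M, ad (ad a b) c = ad a (ad b c)
  add_comm : ∀ a b : M, ad a b = ad b a
  mul_assoc : ∀ a b c : M, ml (ml a b) c = ml a (ml b c)
  mul_comm : ∀ a b : M, ml a b = ml b a
  distrib : ∀ a b c : M, ml a (ad b c) = ad (ml a b) (ml a c)
  add_zero : ∀ a : M, ad a z0 = a
  mul_zero : ∀ a : M, ml a z0 = z0
  mul_one : ∀ a : M, ml a o1 = a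
  lt_trans : ∀ a b c : M, lt' a b ∧ lt' b c → lt' a c
  lt_irrefl : ∀ a : M, ¬ lt' a a
  lt_total : ∀ a b : M, (lt' a b ∨ a = b) ∨ lt' b a
  add_lt : ∀ a b c : M, lt' a b → lt' (ad a c) (ad b c)
  mul_lt : ∀ a b c : M, ¬(c = z0) ∧ lt' a b → lt' (ml a c) (ml b c)
  lt_iff : ∀ a b : M, lt' a b ↔ ∃ c, ad (ad a c) o1 = b
  zero_lt_one : lt' (z0 : M) o1
  one_le : ∀ a : M, lt' z0 a → (lt' o1 a ∨ o1 = a)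
  zero_le : ∀ a : M, lt' (z0 : M) a ∨ z0 = a

lemma pam_iff : M ⊨ PAminus ↔ PAm M := by
  rw [Theory.model_iff]
  simp only [PAminus, Set.mem_insert_iff, Set.mem_singleton_iff, forall_eq_or_imp, forall_eq]
  rw [axiom_iff_1, axiom_iff_2, axiom_iff_3, axiom_iff_4, axiom_iff_5, axiom_iff_6,
    axiom_iff_7, axiom_iff_8, axiom_iff_9, axiom_iff_10, axiom_iff_11, axiom_iff_12,
    axiom_iff_13, axiom_iff_14, axiom_iff_15, axiom_iff_16]
  constructor
  · rintro ⟨h1, h2, h3, h4, h5, h6, h7, h8, h9, h10, h11, h12, h13, h14, ⟨h15a, h15b⟩, h16⟩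
    exact ⟨h1, h2, h3, h4, h5, h6, h7, h8, h9, h10, h11, h12, h13, h14, h15a, h15b, h16⟩
  · rintro ⟨h1, h2, h3, h4, h5, h6, h7, h8, h9, h10, h11, h12, h13, h14, h15a, h15b, h16⟩
    exact ⟨h1, h2, h3, h4, h5, h6, h7, h8, h9, h10, h11, h12, h13, h14, ⟨h15a, h15b⟩, h16⟩

end Stmt11Aux
namespace Stmt11Aux
open FirstOrder Language Structure

variable {M : Type*} [Lor.Structure M]

/-- `a ≤ b` in a model. -/
def le' (a b : M) : Prop := lt' a b ∨ a = b

/-- parity predicate -/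
def par (a : M) : Prop := ∃ z : M, ad z z = a ∨ ad (ad z z) o1 = a

namespace PAm

variable (h : PAm M)
include h

lemma zero_add (a : M) : ad z0 a = a := by rw [h.add_comm, h.add_zero]

lemma add_cancel {a b c : M} (e : ad a c = ad b c) : a = b := by
  rcases h.lt_total a b with (hl | he) | hg
  · exact absurd (e ▸ h.add_lt a b c hl) (h.lt_irrefl _)
  · exact he
  · exact absurd (e ▸ h.add_lt b a c hg) (fun q => h.lt_irrefl _ q)

lemma lt_add_one (a : M) : lt' a (ad a o1) :=
  (h.lt_iff a (ad a o1)).2 ⟨z0, by rw [h.add_zero]⟩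

lemma lt_add_of_pos {a c : M} (hc : lt' z0 c) : lt' a (ad a c) := by
  have := h.add_lt z0 c a hc
  rwa [h.zero_add, h.add_comm c a] at this

lemma le_of_lt_add_one {a b : M} (hab : lt' a (ad b o1)) : le' a b := by
  obtain ⟨c, hc⟩ := (h.lt_iff a (ad b o1)).1 hab
  have hac : ad a c = b := h.add_cancel hc
  rcases h.zero_le c with hpos | hzero
  · exact Or.inl (hac ▸ h.lt_add_of_pos hpos)
  · rw [← hzero, h.add_zero] at hac; exact Or.inr hac

lemma lt_lt_trans {a b c : M} (h1 : lt' a b) (h2 : lt' b c) : lt' a c :=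
  h.lt_trans a b c ⟨h1, h2⟩

lemma le_lt_trans {a b c : M} (h1 : le' a b) (h2 : lt' b c) : lt' a c := by
  rcases h1 with h1 | rfl
  · exact h.lt_lt_trans h1 h2
  · exact h2

lemma lt_le_trans {a b c : M} (h1 : lt' a b) (h2 : le' b c) : lt' a c := by
  rcases h2 with h2 | rfl
  · exact h.lt_lt_trans h1 h2
  · exact h1

lemma le_trans {a b c : M} (h1 : le' a b) (h2 : le' b c) : le' a c := by
  rcases h2 with h2 | rfl
  · exact Or.inl (h.le_lt_trans h1 h2)
  · exact h1

lemma le_add_self (a : M) : le' a (ad a a) := by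
  rcases h.zero_le a with hpos | hzero
  · exact Or.inl (h.lt_add_of_pos hpos)
  · exact Or.inr (by rw [← hzero, h.add_zero])

lemma le_zero {a : M} (ha : le' a z0) : a = z0 := by
  rcases ha with ha | rfl
  · rcases h.zero_le a with hpos | hzero
    · exact absurd (h.lt_lt_trans ha hpos) (h.lt_irrefl a)
    · exact hzero.symm
  · rfl

lemma exists_eq_succ {a : M} (ha : lt' z0 a) : ∃ w : M, ad w o1 = a := by
  rcases h.one_le a ha with hlt | heq
  · obtain ⟨c, hc⟩ := (h.lt_iff o1 a).1 hlt
    exact ⟨ad o1 c, hc⟩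
  · exact ⟨z0, by rw [h.zero_add, heq]⟩

lemma par_zero : par (z0 : M) := ⟨z0, Or.inl (h.add_zero z0)⟩

lemma par_succ {a : M} (ha : par a) : par (ad a o1) := by
  obtain ⟨z, hz | hz⟩ := ha
  · exact ⟨z, Or.inr (by rw [hz])⟩
  · refine ⟨ad z o1, Or.inl ?_⟩
    rw [← hz]
    calc ad (ad z o1) (ad z o1) = ad (ad (ad z o1) z) o1 := (h.add_assoc _ _ _).symm
    _ = ad (ad z (ad z o1)) o1 := by rw [h.add_comm (ad z o1) z, h.add_assoc]
    _ = ad (ad (ad z z) o1) o1 := by rw [← h.add_assoc z z o1]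

lemma succ_ne_zero (a : M) : ad a o1 ≠ z0 := by
  intro e
  have h1 : lt' a z0 := e ▸ h.lt_add_one a
  rcases h.zero_le a with hpos | hzero
  · exact h.lt_irrefl a (h.lt_lt_trans h1 hpos)
  · rw [← hzero] at h1; exact h.lt_irrefl z0 h1

end PAm

end Stmt11Aux
namespace Stmt11Aux
open FirstOrder Language Structure

/-- `z + z = y ∨ (z + z) + 1 = y` with `y = &0`, `z = &1`. -/
def parBF : Lor.BoundedFormula (Fin 0 ⊕ Fin 1) 2 :=
  (addT &1 &1 =' &0) ⊔ (addT (addT &1 &1) oneT =' &0)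

/-- the distinguished free variable `x` in a depth-1 context -/
def xv : Lor.Term ((Fin 0 ⊕ Fin 1) ⊕ Fin 1) := Term.var (Sum.inl (Sum.inr 0))

/-- `φ₀(x) = ∀ y ≤ x, ∃ z (z+z = y ∨ z+z+1 = y)` -/
def φ0F : OneVarFormula := ∀' ((ltBF &0 xv ⊔ (&0 =' xv)) ⟹ ∃' parBF)

/-- `φ₁(x) = ∀ y (y+y ≤ x → ∃ z (z+z = y ∨ z+z+1 = y))` -/
def φ1F : OneVarFormula := ∀' ((ltBF (addT &0 &0) xv ⊔ (addT &0 &0 =' xv)) ⟹ ∃' parBF)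

variable {M : Type*} [Lor.Structure M]

@[simp] lemma realize_φ0F (v : (Fin 0 ⊕ Fin 1) → M) (xs : Fin 0 → M) :
    BoundedFormula.Realize φ0F v xs ↔ ∀ y : M, le' y (v (Sum.inr 0)) → par y := by
  rw [show xs = default from Subsingleton.elim _ _]
  simp [φ0F, parBF, xv,  BoundedFormula.realize_all,
    BoundedFormula.realize_imp, BoundedFormula.realize_sup, BoundedFormula.realize_ex,
    BoundedFormula.realize_bdEqual, Fin.snoc, le', par]

@[simp] lemma realize_φ1F (v : (Fin 0 ⊕ Fin 1) → M) (xs : Fin 0 → M) :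
    BoundedFormula.Realize φ1F v xs ↔ ∀ y : M, le' (ad y y) (v (Sum.inr 0)) → par y := by
  rw [show xs = default from Subsingleton.elim _ _]
  simp [φ1F, parBF, xv,  BoundedFormula.realize_all,
    BoundedFormula.realize_imp, BoundedFormula.realize_sup, BoundedFormula.realize_ex,
    BoundedFormula.realize_bdEqual, Fin.snoc, le', par]

@[simp] lemma realize_ltFml' {α : Type} (t u : Lor.Term α) (v : α → M) (xs : Fin 0 → M) :
    BoundedFormula.Realize (ltFml t u) v xs ↔ lt' (t.realize v) (u.realize v) := by
  rw [show xs = default from Subsingleton.elim _ _]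
  exact realize_ltFml t u v

@[simp] lemma realize_relabel0 {α β : Type} (φ : Lor.Formula α) (g : α → β)
    (v : β → M) (xs : Fin 0 → M) :
    BoundedFormula.Realize (Formula.relabel g φ) v xs ↔
      BoundedFormula.Realize φ (v ∘ g) (default : Fin 0 → M) := by
  rw [show xs = default from Subsingleton.elim _ _]
  exact Formula.realize_relabel

end Stmt11Aux
namespace Stmt11Aux
open FirstOrder Language Structure

variable {M : Type*} [Lor.Structure M]

namespace PAm

variable (h : PAm M)
include h

lemma double_succ (w : M) : ad (ad w o1) (ad w o1) = ad (ad (ad w w) o1) o1 := by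
  calc ad (ad w o1) (ad w o1) = ad (ad (ad w o1) w) o1 := (h.add_assoc _ _ _).symm
  _ = ad (ad w (ad w o1)) o1 := by rw [h.add_comm (ad w o1) w, h.add_assoc]
  _ = ad (ad (ad w w) o1) o1 := by rw [← h.add_assoc w w o1]

lemma double_eq_zero {y : M} (e : ad y y = z0) : y = z0 := by
  rcases h.zero_le y with hpos | hzero
  · have h1 : lt' y z0 := e ▸ h.lt_add_of_pos hpos
    exact absurd (h.lt_lt_trans h1 hpos) (h.lt_irrefl y)
  · exact hzero.symm

lemma phi0_zero : ∀ y : M, le' y z0 → par y := by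
  intro y hy
  rw [h.le_zero hy]
  exact h.par_zero

lemma phi0_succ {x : M} (hx : ∀ y : M, le' y x → par y) :
    ∀ y : M, le' y (ad x o1) → par y := by
  intro y hy
  rcases hy with hlt | rfl
  · exact hx y (h.le_of_lt_add_one hlt)
  · exact h.par_succ (hx x (Or.inr rfl))

lemma phi1_zero : ∀ y : M, le' (ad y y) z0 → par y := by
  intro y hy
  rw [h.double_eq_zero (h.le_zero hy)]
  exact h.par_zero

lemma phi1_succ {x : M} (hx : ∀ y : M, le' (ad y y) x → par y) :
    ∀ y : M, le' (ad y y) (ad x o1) → par y := by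
  intro y hy
  rcases hy with hlt | heq
  · exact hx y (h.le_of_lt_add_one hlt)
  · have hy0 : y ≠ z0 := by
      intro e
      rw [e, h.add_zero] at heq
      exact h.succ_ne_zero x heq.symm
    have hpos : lt' z0 y := by
      rcases h.zero_le y with hp | hz
      · exact hp
      · exact absurd hz.symm hy0
    obtain ⟨w, hw⟩ := h.exists_eq_succ hpos
    rw [← hw, h.double_succ w] at heq
    have h2 : ad (ad w w) o1 = x := h.add_cancel heq
    have h3 : le' (ad w w) x := Or.inl (h2 ▸ h.lt_add_one (ad w w))
    have := h.par_succ (hx w h3)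
    rwa [hw] at this

lemma phi0_imp_phi1 {x : M} (hx : ∀ y : M, le' y x → par y) :
    ∀ y : M, le' (ad y y) x → par y := by
  intro y hy
  exact hx y (h.le_trans (h.le_add_self y) hy)

omit h in
lemma all_phi1_imp_phi0 (hx : ∀ x y : M, le' (ad y y) x → par y) :
    ∀ x y : M, le' y x → par y := by
  intro x y _
  exact hx (ad y y) y (Or.inr rfl)

end PAm

/- The five positive statements -/

lemma ind0_φ0 : PAminus ⊨ᵇ closeAll (substP φ0F zeroT) := by
  intro Mb v xs
  have h : PAm Mb := pam_iff.mp Mb.is_model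
  simp [closeAll, substP, BoundedFormula.realize_subst, Formula.Realize]
  exact h.phi0_zero

lemma indS_φ0 : PAminus ⊨ᵇ closeAll (allX (φ0F ⟹ substX φ0F (addT xT oneT))) := by
  intro Mb v xs
  have h : PAm Mb := pam_iff.mp Mb.is_model
  simp [closeAll, allX, substX, xT, BoundedFormula.realize_subst, Formula.Realize]
  intro x hx
  exact h.phi0_succ hx

lemma ind0_φ1 : PAminus ⊨ᵇ closeAll (substP φ1F zeroT) := by
  intro Mb v xs
  have h : PAm Mb := pam_iff.mp Mb.is_model
  simp [closeAll, substP, BoundedFormula.realize_subst, Formula.Realize]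
  exact h.phi1_zero

lemma indS_φ1 : PAminus ⊨ᵇ closeAll (allX (φ1F ⟹ substX φ1F (addT xT oneT))) := by
  intro Mb v xs
  have h : PAm Mb := pam_iff.mp Mb.is_model
  simp [closeAll, allX, substX, xT, BoundedFormula.realize_subst, Formula.Realize]
  intro x hx
  exact h.phi1_succ hx

lemma cut_φ0 : PAminus ⊨ᵇ closeAll
    (ltFml (Term.var (Sum.inr 0) : Lor.Term (Fin 0 ⊕ Fin 2)) (Term.var (Sum.inr 1)) ⊓
        φ0F.relabel (Sum.elim (fun i => Sum.inl i) fun _ => Sum.inr 1) ⟹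
      φ0F.relabel (Sum.elim (fun i => Sum.inl i) fun _ => Sum.inr 0)) := by
  intro Mb v xs
  have h : PAm Mb := pam_iff.mp Mb.is_model
  simp [closeAll, Formula.Realize]
  intro i hlt hall y hy
  exact hall y (h.le_trans hy (Or.inl hlt))

lemma cut_φ1 : PAminus ⊨ᵇ closeAll
    (ltFml (Term.var (Sum.inr 0) : Lor.Term (Fin 0 ⊕ Fin 2)) (Term.var (Sum.inr 1)) ⊓
        φ1F.relabel (Sum.elim (fun i => Sum.inl i) fun _ => Sum.inr 1) ⟹
      φ1F.relabel (Sum.elim (fun i => Sum.inl i) fun _ => Sum.inr 0)) := by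
  intro Mb v xs
  have h : PAm Mb := pam_iff.mp Mb.is_model
  simp [closeAll, Formula.Realize]
  intro i hlt hall y hy
  exact hall y (h.le_trans hy (Or.inl hlt))

lemma equiv_φ0_φ1 : PAminus ⊨ᵇ (allS φ0F ⇔ allS φ1F) := by
  intro Mb v xs
  have h : PAm Mb := pam_iff.mp Mb.is_model
  simp [allS, closeAll, allX, Formula.Realize, BoundedFormula.realize_iff]
  constructor
  · intro hx i
    exact h.phi0_imp_phi1 (hx i)
  · intro hx i y hy
    exact hx (fun _ => ad y y) y (Or.inr rfl)

lemma imp_φ0_φ1 : PAminus ⊨ᵇ closeAll (allX (φ0F ⟹ φ1F)) := by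
  intro Mb v xs
  have h : PAm Mb := pam_iff.mp Mb.is_model
  simp [closeAll, allX, Formula.Realize]
  intro i hx
  exact h.phi0_imp_phi1 hx

end Stmt11Aux
namespace Stmt11Aux
open FirstOrder Language Structure Polynomial Filter

/-- eventual positivity of an integer polynomial with positive leading coefficient -/
lemma ev_pos {p : Polynomial ℤ} (hd : 1 ≤ p.natDegree) (hc : 0 < p.leadingCoeff) :
    ∀ᶠ n : ℕ in atTop, 0 < p.eval (n : ℤ) := by
  have hp : p ≠ 0 := fun e => by simp [e] at hd
  set f : ℤ →+* ℝ := Int.castRingHom ℝ with hf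
  set P : Polynomial ℝ := p.map f with hP
  have hPd : 0 < P.degree := by
    rw [hP, degree_map_eq_of_injective Int.cast_injective]
    exact natDegree_pos_iff_degree_pos.1 (lt_of_lt_of_le one_pos hd)
  have hPl : 0 ≤ P.leadingCoeff := by
    rw [hP, leadingCoeff_map_of_injective Int.cast_injective]
    simp only [hf, eq_intCast]
    exact_mod_cast hc.le
  have ht := P.tendsto_atTop_of_leadingCoeff_nonneg hPd hPl
  have ht2 : Tendsto (fun n : ℕ => P.eval ((n : ℤ) : ℝ)) atTop atTop := by
    have hcast : Tendsto (fun n : ℕ => ((n : ℤ) : ℝ)) atTop atTop := by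
      simpa using tendsto_natCast_atTop_atTop (R := ℝ)
    exact ht.comp hcast
  filter_upwards [ht2.eventually_gt_atTop 0] with n hn
  have : P.eval ((n : ℤ) : ℝ) = ((p.eval (n : ℤ) : ℤ) : ℝ) := by
    rw [hP, eval_map]
    exact eval₂_at_apply f (n : ℤ)
  rw [this] at hn
  exact_mod_cast hn

/-- sign dichotomy for a nonzero integer polynomial -/
lemma ev_dich {p : Polynomial ℤ} (hp : p ≠ 0) :
    (∀ᶠ n : ℕ in atTop, 0 < p.eval (n : ℤ)) ∨ (∀ᶠ n : ℕ in atTop, p.eval (n : ℤ) < 0) := by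
  rcases Nat.eq_zero_or_pos p.natDegree with h0 | h1
  · have hC : p = C (p.coeff 0) := eq_C_of_natDegree_eq_zero h0
    have hc0 : p.coeff 0 ≠ 0 := fun e => hp (by rw [hC, e, map_zero])
    rcases hc0.lt_or_gt with hneg | hpos
    · exact Or.inr (Filter.Eventually.of_forall fun n => by rw [hC]; simpa using hneg)
    · exact Or.inl (Filter.Eventually.of_forall fun n => by rw [hC]; simpa using hpos)
  · rcases lt_trichotomy p.leadingCoeff 0 with hneg | hzero | hpos
    · right
      have h1' : 1 ≤ (-p).natDegree := by rwa [natDegree_neg]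
      have hc' : 0 < (-p).leadingCoeff := by rw [leadingCoeff_neg]; omega
      filter_upwards [ev_pos h1' hc'] with n hn
      rw [eval_neg] at hn; omega
    · exact absurd (leadingCoeff_eq_zero.1 hzero) hp
    · exact Or.inl (ev_pos h1 hpos)

/-- The countermodel: eventually nonnegative integer polynomials. -/
def Poly : Type := {p : Polynomial ℤ // ∀ᶠ n : ℕ in atTop, 0 ≤ p.eval (n : ℤ)}

namespace PolyM

noncomputable def pzero : Poly := ⟨0, Filter.Eventually.of_forall fun _ => by simp⟩
noncomputable def pone : Poly := ⟨1, Filter.Eventually.of_forall fun _ => by simp⟩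
noncomputable def padd (a b : Poly) : Poly :=
  ⟨a.1 + b.1, by filter_upwards [a.2, b.2] with n ha hb; simp; omega⟩
noncomputable def pmul (a b : Poly) : Poly :=
  ⟨a.1 * b.1, by filter_upwards [a.2, b.2] with n ha hb; simp; positivity⟩
@[simp] lemma padd_val (a b : Poly) : (padd a b).1 = a.1 + b.1 := rfl
@[simp] lemma pmul_val (a b : Poly) : (pmul a b).1 = a.1 * b.1 := rfl
@[simp] lemma pzero_val : (pzero).1 = 0 := rfl
@[simp] lemma pone_val : (pone).1 = 1 := rfl

def plt (a b : Poly) : Prop := ∀ᶠ n : ℕ in atTop, a.1.eval (n : ℤ) < b.1.eval (n : ℤ)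

noncomputable instance : Lor.Structure Poly where
  funMap {n} f := match f with
    | .zero => fun _ => pzero
    | .one => fun _ => pone
    | .add => fun v => padd (v 0) (v 1)
    | .mul => fun v => pmul (v 0) (v 1)
  RelMap {n} r := match r with
    | .lt => fun v => plt (v 0) (v 1)

@[simp] lemma z0_def : (z0 : Poly) = pzero := rfl
@[simp] lemma o1_def : (o1 : Poly) = pone := rfl
@[simp] lemma ad_def (a b : Poly) : ad a b = padd a b := rfl
@[simp] lemma ml_def (a b : Poly) : ml a b = pmul a b := rfl
@[simp] lemma lt'_def (a b : Poly) : lt' a b = plt a b := rfl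

lemma pos_of_ne_zero {c : Poly} (hc : c ≠ pzero) : ∀ᶠ n : ℕ in atTop, 0 < c.1.eval (n : ℤ) := by
  have hc1 : c.1 ≠ 0 := fun e => hc (Subtype.ext e)
  rcases ev_dich hc1 with hpos | hneg
  · exact hpos
  · exfalso
    obtain ⟨n, h1, h2⟩ := (c.2.and hneg).exists
    omega

lemma pam : PAm Poly := by
  constructor
  case add_assoc => intro a b c; apply Subtype.ext; simp only [ad_def, padd_val]; ring
  case add_comm => intro a b; apply Subtype.ext; simp only [ad_def, padd_val]; ring
  case mul_assoc => intro a b c; apply Subtype.ext; simp only [ml_def, pmul_val]; ring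
  case mul_comm => intro a b; apply Subtype.ext; simp only [ml_def, pmul_val]; ring
  case distrib => intro a b c; apply Subtype.ext; simp only [ad_def, ml_def, padd_val, pmul_val]; ring
  case add_zero => intro a; apply Subtype.ext; simp only [ad_def, z0_def, padd_val, pzero_val]; ring
  case mul_zero => intro a; apply Subtype.ext; simp only [ml_def, z0_def, pmul_val, pzero_val]; ring
  case mul_one => intro a; apply Subtype.ext; simp only [ml_def, o1_def, pmul_val, pone_val]; ring
  case lt_trans =>
    rintro a b c ⟨h1, h2⟩
    simp only [lt'_def, plt] at *
    filter_upwards [h1, h2] with n ha hb; omega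
  case lt_irrefl =>
    intro a h
    simp only [lt'_def, plt] at h
    obtain ⟨n, hn⟩ := h.exists
    omega
  case lt_total =>
    intro a b
    by_cases hab : a.1 = b.1
    · exact Or.inl (Or.inr (Subtype.ext hab))
    · have hd : b.1 - a.1 ≠ 0 := sub_ne_zero.2 (Ne.symm hab)
      rcases ev_dich hd with hpos | hneg
      · refine Or.inl (Or.inl ?_)
        simp only [lt'_def, plt]
        filter_upwards [hpos] with n hn
        simp only [eval_sub] at hn; omega
      · refine Or.inr ?_
        simp only [lt'_def, plt]
        filter_upwards [hneg] with n hn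
        simp only [eval_sub] at hn; omega
  case add_lt =>
    intro a b c hab
    simp only [lt'_def, plt, ad_def] at *
    filter_upwards [hab] with n hn
    simp only [padd_val, eval_add]
    omega
  case mul_lt =>
    rintro a b c ⟨hc, hab⟩
    simp only [lt'_def, plt, ml_def] at *
    have hcpos := pos_of_ne_zero (by simpa using hc)
    filter_upwards [hab, hcpos] with n h1 h2
    simp only [pmul_val, eval_mul]
    exact mul_lt_mul_of_pos_right h1 h2
  case lt_iff =>
    intro a b
    simp only [lt'_def, plt]
    constructor
    · intro hab
      refine ⟨⟨b.1 - a.1 - 1, ?_⟩, ?_⟩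
      · filter_upwards [hab] with n hn
        simp only [eval_sub, eval_one]
        omega
      · apply Subtype.ext; show a.1 + (b.1 - a.1 - 1) + 1 = b.1; ring
    · rintro ⟨c, hc⟩
      have hval : a.1 + c.1 + 1 = b.1 := by
        have := congrArg Subtype.val hc
        simpa only [ad_def, o1_def, padd_val, pone_val] using this
      filter_upwards [c.2] with n hn
      rw [← hval]
      simp only [eval_add, eval_one]
      omega
  case zero_lt_one =>
    simp only [lt'_def, plt]
    exact Filter.Eventually.of_forall fun n => by simp [pzero, pone]
  case one_le =>
    intro a ha
    simp only [lt'_def, plt, z0_def, o1_def, pzero_val, pone_val] at *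
    by_cases h1 : a.1 = 1
    · exact Or.inr (Subtype.ext h1.symm)
    · have hd : a.1 - 1 ≠ 0 := sub_ne_zero.2 h1
      rcases ev_dich hd with hpos | hneg
      · refine Or.inl ?_
        filter_upwards [hpos] with n hn
        simp only [eval_sub, eval_one] at hn
        simp only [eval_one]
        omega
      · exfalso
        obtain ⟨n, h2, h3⟩ := (ha.and hneg).exists
        simp only [eval_sub, eval_one, eval_zero] at h2 h3
        omega
  case zero_le =>
    intro a
    by_cases h0 : a.1 = 0
    · exact Or.inr (Subtype.ext h0.symm)
    · refine Or.inl ?_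
      simp only [lt'_def, plt, z0_def, pzero]
      have := pos_of_ne_zero (c := a) (fun e => h0 (congrArg Subtype.val e))
      filter_upwards [this] with n hn
      simpa using hn

end PolyM

end Stmt11Aux
namespace Stmt11Aux
open FirstOrder Language Structure Polynomial Filter

namespace PolyM

noncomputable def Xp : Poly :=
  ⟨X, Filter.Eventually.of_forall fun n => by simp⟩

/-- A polynomial that is eventually nonnegative and eventually at most `n/2` is constant. -/
lemma const_of_half_lt {y : Polynomial ℤ}
    (h0 : ∀ᶠ n : ℕ in atTop, 0 ≤ y.eval (n : ℤ))
    (h1 : ∀ᶠ n : ℕ in atTop, y.eval (n : ℤ) + y.eval (n : ℤ) < (n : ℤ)) :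
    y.natDegree = 0 := by
  by_contra hd
  have hd1 : 1 ≤ y.natDegree := Nat.one_le_iff_ne_zero.2 hd
  have hy0 : y ≠ 0 := by intro e; rw [e] at hd; simp at hd
  have hlc : 0 < y.leadingCoeff := by
    rcases lt_trichotomy y.leadingCoeff 0 with hneg | hzero | hpos
    · exfalso
      have h1' : 1 ≤ (-y).natDegree := by rwa [natDegree_neg]
      have hc' : 0 < (-y).leadingCoeff := by rw [leadingCoeff_neg]; omega
      obtain ⟨n, hn1, hn2⟩ := (h0.and (ev_pos h1' hc')).exists
      rw [eval_neg] at hn2; omega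
    · exact absurd (leadingCoeff_eq_zero.1 hzero) hy0
    · exact hpos
  set D := y.natDegree with hD
  set q : Polynomial ℤ := y + y - X with hq
  have hlc' : y.coeff D = y.leadingCoeff := rfl
  have hqc : 0 < q.coeff D := by
    have hc : q.coeff D = y.coeff D + y.coeff D - X.coeff D := by
      rw [hq, coeff_sub, coeff_add]
    rcases eq_or_lt_of_le hd1 with h1eq | h2le
    · rw [← h1eq] at hc ⊢
      rw [coeff_X_one] at hc
      have h1' : y.coeff 1 = y.leadingCoeff := by rw [h1eq]; exact hlc'
      omega
    · have hXc : X.coeff D = (0 : ℤ) := by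
        rw [coeff_X]
        simp only [ite_eq_right_iff]
        intro h; omega
      rw [hc, hXc, hlc']
      omega
  have hqd : q.natDegree = D := by
    have hle : q.natDegree ≤ D := by
      refine le_trans (natDegree_sub_le _ _) ?_
      simp only [max_le_iff]
      constructor
      · exact le_trans (natDegree_add_le _ _) (by simp [hD])
      · simpa [natDegree_X] using hd1
    exact le_antisymm hle (le_natDegree_of_ne_zero hqc.ne')
  have hq1 : 1 ≤ q.natDegree := hqd ▸ hd1
  have hql : 0 < q.leadingCoeff := by
    have : q.leadingCoeff = q.coeff D := by rw [Polynomial.leadingCoeff, hqd]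
    rw [this]; exact hqc
  obtain ⟨n, hn1, hn2⟩ := (h1.and (ev_pos hq1 hql)).exists
  rw [hq] at hn2
  simp only [eval_sub, eval_add, eval_X] at hn2
  omega

lemma hyp_holds : ∀ y : Poly, le' (ad y y) Xp → par y := by
  intro y hy
  have hy' : ∀ᶠ n : ℕ in atTop, y.1.eval (n : ℤ) + y.1.eval (n : ℤ) < (n : ℤ) := by
    rcases hy with hlt | heq
    · have : plt (padd y y) Xp := hlt
      filter_upwards [this] with n hn
      simpa [Xp] using hn
    · exfalso
      have hval : y.1 + y.1 = X := congrArg Subtype.val heq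
      have := congrArg (fun p => Polynomial.coeff p 1) hval
      simp only [coeff_add, coeff_X_one] at this
      omega
  have hdeg : y.1.natDegree = 0 := const_of_half_lt y.2 hy'
  have hC : y.1 = C (y.1.coeff 0) := eq_C_of_natDegree_eq_zero hdeg
  set c : ℤ := y.1.coeff 0 with hc
  have hc0 : 0 ≤ c := by
    obtain ⟨n, hn⟩ := y.2.exists
    rw [hC] at hn
    simpa using hn
  rcases Int.even_or_odd c with ⟨d, hd⟩ | ⟨d, hd⟩
  · have hd0 : 0 ≤ d := by omega
    refine ⟨⟨C d, Filter.Eventually.of_forall fun n => by simpa using hd0⟩, Or.inl ?_⟩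
    apply Subtype.ext
    show C d + C d = y.1
    rw [hC, ← C_add]
    congr 1
    omega
  · have hd0 : 0 ≤ d := by omega
    refine ⟨⟨C d, Filter.Eventually.of_forall fun n => by simpa using hd0⟩, Or.inr ?_⟩
    apply Subtype.ext
    show C d + C d + 1 = y.1
    rw [hC, ← C_1, ← C_add, ← C_add]
    congr 1
    omega

lemma not_par_Xp : ¬ par Xp := by
  rintro ⟨z, hz | hz⟩
  · have hval : z.1 + z.1 = X := congrArg Subtype.val hz
    have := congrArg (fun p => Polynomial.coeff p 1) hval
    simp only [coeff_add, coeff_X_one] at this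
    omega
  · have hval : z.1 + z.1 + 1 = X := congrArg Subtype.val hz
    have := congrArg (fun p => Polynomial.coeff p 1) hval
    simp only [coeff_add, coeff_X_one, coeff_one] at this
    omega

lemma no_real : ¬ (Poly ⊨ (closeAll (allX (φ1F ⟹ φ0F)) : Lor.Sentence)) := by
  intro hcon
  simp only [Sentence.Realize, closeAll, allX, Formula.Realize] at hcon
  simp [closeAll, allX, Formula.Realize] at hcon
  exact not_par_Xp (hcon (fun _ => Xp) hyp_holds Xp (Or.inr rfl))

end PolyM

end Stmt11Aux
namespace Stmt11Aux
open FirstOrder Language Structure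

lemma not_neg : ¬ PAminus ⊨ᵇ closeAll (allX (φ1F ⟹ φ0F)) := by
  intro hcon
  haveI hmodel : Poly ⊨ PAminus := pam_iff.mpr PolyM.pam
  haveI : Nonempty Poly := ⟨PolyM.pzero⟩
  have hreal : Poly ⊨ (closeAll (allX (φ1F ⟹ φ0F)) : Lor.Sentence) :=
    hcon (Theory.ModelType.of PAminus Poly) default default
  exact PolyM.no_real hreal

end Stmt11Aux

/-- There are cuts `φ₀(x)` and `φ₁(x)` such that `PA⁻` proves both
`∀x φ₀(x) ↔ ∀x φ₁(x)` and `∀x( φ₀(x) → φ₁(x) )`, but `PA⁻` does not prove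
`∀x( φ₁(x) → φ₀(x) )`. -/
theorem stmt11 :
    ∃ φ₀ φ₁ : OneVarFormula, IsCut φ₀ ∧ IsCut φ₁ ∧
      PAminus ⊨ᵇ (allS φ₀ ⇔ allS φ₁) ∧
        PAminus ⊨ᵇ closeAll (allX (φ₀ ⟹ φ₁)) ∧
          ¬ PAminus ⊨ᵇ closeAll (allX (φ₁ ⟹ φ₀)) := by
  refine ⟨Stmt11Aux.φ0F, Stmt11Aux.φ1F, ?_, ?_, ?_, ?_, ?_⟩
  · exact ⟨⟨Stmt11Aux.ind0_φ0, Stmt11Aux.indS_φ0⟩, Stmt11Aux.cut_φ0⟩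
  · exact ⟨⟨Stmt11Aux.ind0_φ1, Stmt11Aux.indS_φ1⟩, Stmt11Aux.cut_φ1⟩
  · exact Stmt11Aux.equiv_φ0_φ1
  · exact Stmt11Aux.imp_φ0_φ1
  · exact Stmt11Aux.not_neg
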